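/- Let G be a stochastic game with terminal set T, and let σu2 be the memoryless Player 2 strategy defined by σu2(v)(v') = 1/|post(v)| for every v ∈ V2 and v' ∈ post(v). Then G is stopping under fairness if and only if Prob^{σ1,σu2}_{G,v}(◇T) = 1 for every v ∈ V and every σ1 ∈ Σ1. -/

import Mathlib

open MeasureTheory
open scoped ENNReal Classical

/-- A turn-based two-player stochastic game on a finite vertex set `V`. -/
structure StochGame (V : Type*) [Fintype V] where
  /-- Player 1 vertices -/
  V1 : Finset V
  /-- Player 2 vertices -/
  V2 : Finset V
  /-- probabilistic vertices -/
  VP : Finset V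
  cover : ∀ v : V, v ∈ V1 ∨ v ∈ V2 ∨ v ∈ VP
  disj12 : ∀ v : V, ¬(v ∈ V1 ∧ v ∈ V2)
  disj1P : ∀ v : V, ¬(v ∈ V1 ∧ v ∈ VP)
  disj2P : ∀ v : V, ¬(v ∈ V2 ∧ v ∈ VP)
  /-- the probabilistic transition function -/
  δ : V → V → ℝ
  δ_nonneg : ∀ v v', 0 ≤ δ v v'
  δ_le_one : ∀ v v', δ v v' ≤ 1
  det : ∀ v : V, (v ∈ V1 ∨ v ∈ V2) → ∀ v', δ v v' = 0 ∨ δ v v' = 1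
  prob : ∀ v ∈ VP, ∑ v' : V, δ v v' = 1
  post_nonempty : ∀ v : V, ∃ v', 0 < δ v v'

namespace StochGame

variable {V : Type*} [Fintype V]

/-- successors of a vertex -/
def post (G : StochGame V) (v : V) : Set V := {v' | 0 < G.δ v v'}

/-- a vertex is terminal if `δ(v,v) = 1` and `δ(v,v') = 0` for `v' ≠ v`. -/
def Terminal (G : StochGame V) (v : V) : Prop :=
  G.δ v v = 1 ∧ ∀ v', v' ≠ v → G.δ v v' = 0

/-- A strategy for the player owning the vertices in `P`: a function assigning to each
finite history and current vertex a probability distribution over vertices, supported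
on successors when the current vertex belongs to `P`. -/
structure Strategy (G : StochGame V) (P : Finset V) where
  f : List V → V → V → ℝ
  nonneg : ∀ h v v', 0 ≤ f h v v'
  sum_one : ∀ h v, ∑ v' : V, f h v v' = 1
  support : ∀ h v, v ∈ P → ∀ v', 0 < f h v v' → 0 < G.δ v v'

variable {G : StochGame V} {P : Finset V}

/-- a memoryless strategy only depends on the current vertex -/
def Strategy.Memoryless (σ : Strategy G P) : Prop :=
  ∀ h h' cur, σ.f h cur = σ.f h' cur

/-- a deterministic (pure) strategy takes Dirac distributions as values -/
def Strategy.Deterministic (σ : Strategy G P) : Prop :=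
  ∀ h cur, ∃ v', ∀ u, σ.f h cur u = if u = v' then 1 else 0

/-- a semi-Markov strategy depends only on the initial vertex, the number of elapsed
steps and the current vertex -/
def Strategy.SemiMarkov (σ : Strategy G P) : Prop :=
  ∀ (v0 : V) (h h' : List V) (cur : V), h.length = h'.length →
    σ.f (v0 :: h) cur = σ.f (v0 :: h') cur

variable [DecidableEq V]

/-- one-step transition probability given strategies of both players -/
noncomputable def step (G : StochGame V) (σ1 : Strategy G G.V1) (σ2 : Strategy G G.V2)
    (h : List V) (v v' : V) : ℝ :=
  if v ∈ G.V1 then σ1.f h v v' else if v ∈ G.V2 then σ2.f h v v' else G.δ v v'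

/-- the history consisting of the first `i` vertices of `w` -/
def hist (w : ℕ → V) (i : ℕ) : List V := (List.range i).map w

/-- probability that the play starts with the vertices `w 0, w 1, …, w n` when
the game starts at `v` and the players use strategies `σ1`, `σ2`. -/
noncomputable def prefixProb (G : StochGame V) (σ1 : Strategy G G.V1) (σ2 : Strategy G G.V2)
    (v : V) (n : ℕ) (w : ℕ → V) : ℝ :=
  (if w 0 = v then 1 else 0) *
    ∏ i ∈ Finset.range n, G.step σ1 σ2 (hist w i) (w i) (w (i + 1))

/-- the cylinder of all infinite plays agreeing with `w` on the first `n+1` coordinates -/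
def cyl (n : ℕ) (w : ℕ → V) : Set (ℕ → V) := {ω | ∀ i ≤ n, ω i = w i}

variable [MeasurableSpace V]

/-- `μ` is the path measure of the game `G` starting at `v` under strategies `σ1, σ2`:
it is the (unique) probability measure on `V^ω` (with the product σ-algebra) whose
cylinder probabilities are given by the products of the transition probabilities. -/
def IsPathMeasure (G : StochGame V) (σ1 : Strategy G G.V1) (σ2 : Strategy G G.V2)
    (v : V) (μ : Measure (ℕ → V)) : Prop :=
  IsProbabilityMeasure μ ∧
    ∀ (n : ℕ) (w : ℕ → V), μ (cyl n w) = ENNReal.ofReal (G.prefixProb σ1 σ2 v n w)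

/-- the set of vertices occurring infinitely often in a play -/
def infOcc (ω : ℕ → V) : Set V := {u | ∀ N, ∃ n, N ≤ n ∧ ω n = u}

/-- the set of plays that are fair for Player 2 -/
def FP2 (G : StochGame V) : Set (ℕ → V) :=
  {ω | ∀ u ∈ G.V2, u ∈ infOcc ω → ∀ u' ∈ G.post u, u' ∈ infOcc ω}

/-- the event `◇T` that a terminal vertex is reached -/
def ReachT (G : StochGame V) : Set (ℕ → V) := {ω | ∃ i, G.Terminal (ω i)}

/-- A Player 2 strategy is (almost surely) fair if the fair plays have probability 1
under any Player 1 strategy and any initial vertex. -/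
def Fair (G : StochGame V) (σ2 : Strategy G G.V2) : Prop :=
  ∀ (σ1 : Strategy G G.V1) (v : V) (μ : Measure (ℕ → V)),
    G.IsPathMeasure σ1 σ2 v μ → μ G.FP2 = 1

/-- `G` is stopping under fairness: a terminal vertex is reached almost surely
whenever Player 2 plays a fair strategy. -/
def StoppingUnderFairness (G : StochGame V) : Prop :=
  ∀ (σ1 : Strategy G G.V1) (σ2 : Strategy G G.V2), G.Fair σ2 →
    ∀ (v : V) (μ : Measure (ℕ → V)), G.IsPathMeasure σ1 σ2 v μ → μ G.ReachT = 1

/-- the total accumulated reward of a play -/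
noncomputable def rew (r : V → ℝ) (ω : ℕ → V) : ℝ≥0∞ := ∑' i, ENNReal.ofReal (r (ω i))

/-- the expected total reward -/
noncomputable def expRew (μ : Measure (ℕ → V)) (r : V → ℝ) : ℝ≥0∞ := ∫⁻ ω, rew r ω ∂μ

end StochGame
set_option linter.unusedSectionVars false

namespace StochGame

variable {V : Type*} [Fintype V] [DecidableEq V]

section Basics

variable (G : StochGame V) (σ1 : Strategy G G.V1) (σ2 : Strategy G G.V2)

lemma step_nonneg (h : List V) (x y : V) : 0 ≤ G.step σ1 σ2 h x y := by
  unfold step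
  split_ifs
  · exact σ1.nonneg h x y
  · exact σ2.nonneg h x y
  · exact G.δ_nonneg x y

lemma step_sum_one (h : List V) (x : V) : ∑ y : V, G.step σ1 σ2 h x y = 1 := by
  unfold step
  split_ifs with h1 h2
  · exact σ1.sum_one h x
  · exact σ2.sum_one h x
  · refine G.prob x ?_
    rcases G.cover x with hx | hx | hx
    · exact absurd hx h1
    · exact absurd hx h2
    · exact hx

lemma step_le_one (h : List V) (x y : V) : G.step σ1 σ2 h x y ≤ 1 := by
  rw [← step_sum_one G σ1 σ2 h x]
  exact Finset.single_le_sum (fun i _ => step_nonneg G σ1 σ2 h x i) (Finset.mem_univ y)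

lemma step_sum_ne (h : List V) (x y : V) :
    ∑ z ∈ Finset.univ.filter (fun z => z ≠ y), G.step σ1 σ2 h x z
      = 1 - G.step σ1 σ2 h x y := by
  have := step_sum_one G σ1 σ2 h x
  rw [← Finset.sum_filter_add_sum_filter_not Finset.univ (fun z => z ≠ y)] at this
  have h2 : ∑ z ∈ Finset.univ.filter (fun z => ¬ z ≠ y), G.step σ1 σ2 h x z
      = G.step σ1 σ2 h x y := by
    rw [show Finset.univ.filter (fun z => ¬ z ≠ y) = {y} by ext z; simp]
    simp
  rw [h2] at this
  linarith

variable (v : V)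

lemma prefixProb_nonneg (n : ℕ) (w : ℕ → V) : 0 ≤ G.prefixProb σ1 σ2 v n w := by
  unfold prefixProb
  apply mul_nonneg
  · split_ifs <;> norm_num
  · exact Finset.prod_nonneg fun i _ => step_nonneg G σ1 σ2 _ _ _

lemma prefixProb_succ (n : ℕ) (w : ℕ → V) :
    G.prefixProb σ1 σ2 v (n+1) w
      = G.prefixProb σ1 σ2 v n w * G.step σ1 σ2 (hist w n) (w n) (w (n+1)) := by
  unfold prefixProb
  rw [Finset.prod_range_succ, mul_assoc]

lemma hist_congr {w w' : ℕ → V} (n : ℕ) (hw : ∀ i < n, w i = w' i) :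
    hist w n = hist w' n := by
  unfold hist
  exact List.map_congr_left fun i hi => hw i (List.mem_range.mp hi)

lemma prefixProb_congr {w w' : ℕ → V} (n : ℕ) (hw : ∀ i ≤ n, w i = w' i) :
    G.prefixProb σ1 σ2 v n w = G.prefixProb σ1 σ2 v n w' := by
  unfold prefixProb
  rw [hw 0 (Nat.zero_le _)]
  congr 1
  apply Finset.prod_congr rfl
  intro i hi
  rw [Finset.mem_range] at hi
  rw [hist_congr i (fun j hj => hw j (by omega)), hw i (by omega), hw (i+1) (by omega)]

end Basics

section Tuples

/-- extend a finite tuple to an infinite sequence by repeating the last value -/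
def extT {n : ℕ} (t : Fin (n+1) → V) : ℕ → V := fun i => t ⟨min i n, by omega⟩

/-- restrict an infinite sequence to a finite tuple -/
def res (n : ℕ) (ω : ℕ → V) : Fin (n+1) → V := fun i => ω i

lemma extT_eq {n : ℕ} (t : Fin (n+1) → V) (i : ℕ) (hi : i ≤ n) :
    extT t i = t ⟨i, by omega⟩ := by
  unfold extT
  congr 1
  exact Fin.ext (by simp [Nat.min_eq_left hi])

lemma res_extT {n : ℕ} (t : Fin (n+1) → V) : res n (extT t) = t := by
  funext i
  unfold res
  rw [extT_eq t i (by omega)]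

lemma extT_res (n : ℕ) (ω : ℕ → V) (i : ℕ) (hi : i ≤ n) : extT (res n ω) i = ω i := by
  rw [extT_eq _ i hi]; rfl

lemma extT_snoc_le {K : ℕ} (t : Fin (K+1) → V) (a : V) (i : ℕ) (hi : i ≤ K) :
    extT (Fin.snoc t a : Fin (K+2) → V) i = extT t i := by
  rw [extT_eq _ i (by omega), extT_eq t i hi]
  have : (⟨i, by omega⟩ : Fin (K+2)) = Fin.castSucc ⟨i, by omega⟩ := rfl
  rw [this, Fin.snoc_castSucc]

lemma extT_snoc_last {K : ℕ} (t : Fin (K+1) → V) (a : V) :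
    extT (Fin.snoc t a : Fin (K+2) → V) (K+1) = a := by
  rw [extT_eq _ (K+1) (le_refl _)]
  have : (⟨K+1, by omega⟩ : Fin (K+2)) = Fin.last (K+1) := rfl
  rw [this, Fin.snoc_last]

lemma mem_cyl_extT {n : ℕ} (t : Fin (n+1) → V) (ω : ℕ → V) :
    ω ∈ cyl n (extT t) ↔ res n ω = t := by
  constructor
  · intro h
    funext i
    have := h i.val (by omega)
    rw [extT_eq _ _ (by omega)] at this
    simpa [res] using this
  · rintro rfl i hi
    exact (extT_res n ω i hi).symm

/-- the equivalence between pairs (tuple, new value) and one-longer tuples, via `snoc` -/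
def snocE (K : ℕ) : ((Fin (K+1) → V) × V) ≃ (Fin (K+2) → V) where
  toFun p := Fin.snoc p.1 p.2
  invFun t := (Fin.init t, t (Fin.last (K+1)))
  left_inv p := by simp
  right_inv t := by simp

variable (G : StochGame V) (σ1 : Strategy G G.V1) (σ2 : Strategy G G.V2) (v : V)

lemma prefixProb_snoc (K : ℕ) (t : Fin (K+1) → V) (a : V) :
    G.prefixProb σ1 σ2 v (K+1) (extT (Fin.snoc t a : Fin (K+2) → V))
      = G.prefixProb σ1 σ2 v K (extT t)
          * G.step σ1 σ2 (hist (extT t) K) (extT t K) a := by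
  rw [prefixProb_succ]
  rw [prefixProb_congr G σ1 σ2 v K (w' := extT t) (fun i hi => extT_snoc_le t a i hi)]
  rw [hist_congr (w' := extT t) K (fun i hi => extT_snoc_le t a i (by omega)),
    extT_snoc_le t a K (le_refl _), extT_snoc_last]

lemma total_mass (K : ℕ) :
    ∑ t : Fin (K+1) → V, G.prefixProb σ1 σ2 v K (extT t) = 1 := by
  induction K with
  | zero =>
      rw [← Equiv.sum_comp (Equiv.funUnique (Fin 1) V).symm
        (fun t => G.prefixProb σ1 σ2 v 0 (extT t))]
      unfold prefixProb
      simp only [Finset.range_zero, Finset.prod_empty, mul_one]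
      have : ∀ x : V, extT ((Equiv.funUnique (Fin 1) V).symm x) 0 = x := fun x => by
        rw [extT_eq _ 0 (by omega)]; rfl
      simp only [this]
      simp
  | succ K ih =>
      rw [← Equiv.sum_comp (snocE K) (fun t => G.prefixProb σ1 σ2 v (K+1) (extT t))]
      rw [Fintype.sum_prod_type]
      have : ∀ (t : Fin (K+1) → V) (a : V),
          G.prefixProb σ1 σ2 v (K+1) (extT (snocE K (t, a)))
            = G.prefixProb σ1 σ2 v K (extT t)
                * G.step σ1 σ2 (hist (extT t) K) (extT t K) a := by
        intro t a; exact prefixProb_snoc G σ1 σ2 v K t a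
      simp only [this, ← Finset.mul_sum, step_sum_one, mul_one]
      exact ih

end Tuples

end StochGame
namespace StochGame

variable {V : Type*} [Fintype V] [DecidableEq V]

section Agr

variable (G : StochGame V) (σ1 : Strategy G G.V1) (σ2 : Strategy G G.V2) (v : V)

/-- `t` agrees with `w` on coordinates `≤ n` -/
def agr (n : ℕ) (w : ℕ → V) {K : ℕ} (t : Fin (K+1) → V) : Prop :=
  ∀ i : ℕ, i ≤ n → extT t i = w i

lemma agr_iff_eq_res (n : ℕ) (w : ℕ → V) (t : Fin (n+1) → V) :
    agr n w t ↔ t = res n w := by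
  constructor
  · intro h
    funext i
    have := h i.val (by omega)
    rw [extT_eq _ _ (by omega)] at this
    simpa [res] using this
  · rintro rfl i hi
    exact extT_res n w i hi

lemma agr_snoc (n : ℕ) (w : ℕ → V) {K : ℕ} (hK : n ≤ K) (t : Fin (K+1) → V) (a : V) :
    agr n w (Fin.snoc t a : Fin (K+2) → V) ↔ agr n w t := by
  unfold agr
  constructor
  · intro h i hi
    rw [← extT_snoc_le t a i (by omega)]
    exact h i hi
  · intro h i hi
    rw [extT_snoc_le t a i (by omega)]
    exact h i hi

lemma sum_ext (n K : ℕ) (hK : n ≤ K) (w : ℕ → V) :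
    ∑ t : Fin (K+1) → V, (if agr n w t then G.prefixProb σ1 σ2 v K (extT t) else 0)
      = G.prefixProb σ1 σ2 v n w := by
  induction K, hK using Nat.le_induction with
  | base =>
      have : ∀ t : Fin (n+1) → V,
          (if agr n w t then G.prefixProb σ1 σ2 v n (extT t) else 0)
            = (if t = res n w then G.prefixProb σ1 σ2 v n (extT t) else 0) := by
        intro t
        exact if_congr (agr_iff_eq_res n w t) rfl rfl
      simp only [this]
      rw [Finset.sum_ite_eq' Finset.univ (res n w)
        (fun t => G.prefixProb σ1 σ2 v n (extT t))]
      simp only [Finset.mem_univ, if_true]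
      exact prefixProb_congr G σ1 σ2 v n (fun i hi => extT_res n w i hi)
  | succ K hK ih =>
      rw [← Equiv.sum_comp (snocE K)
        (fun t => if agr n w t then G.prefixProb σ1 σ2 v (K+1) (extT t) else 0)]
      rw [Fintype.sum_prod_type]
      have key : ∀ (t : Fin (K+1) → V) (a : V),
          (if agr n w (snocE K (t, a)) then
              G.prefixProb σ1 σ2 v (K+1) (extT (snocE K (t, a))) else 0)
            = (if agr n w t then G.prefixProb σ1 σ2 v K (extT t) else 0)
                * G.step σ1 σ2 (hist (extT t) K) (extT t K) a := by
        intro t a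
        have h1 : agr n w (snocE K (t, a)) ↔ agr n w t := agr_snoc n w hK t a
        have h2 := prefixProb_snoc G σ1 σ2 v K t a
        by_cases h : agr n w t
        · rw [if_pos (h1.mpr h), if_pos h]; exact h2
        · rw [if_neg (fun hc => h (h1.mp hc)), if_neg h, zero_mul]
      simp only [key, ← Finset.mul_sum, step_sum_one, mul_one]
      exact ih

lemma sum_ext_filter (n K : ℕ) (hK : n ≤ K) (w : ℕ → V) :
    ∑ t ∈ Finset.univ.filter (agr n w (K := K)), G.prefixProb σ1 σ2 v K (extT t)
      = G.prefixProb σ1 σ2 v n w := by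
  rw [← sum_ext G σ1 σ2 v n K hK w, Finset.sum_filter]

end Agr

section PathMeasure

variable [MeasurableSpace V] [DiscreteMeasurableSpace V]

lemma measurable_coord (i : ℕ) (s : Set V) : MeasurableSet {ω : ℕ → V | ω i ∈ s} :=
  (DiscreteMeasurableSpace.forall_measurableSet s).preimage (measurable_pi_apply i)

lemma measurable_cyl (n : ℕ) (w : ℕ → V) : MeasurableSet (cyl n w) := by
  have : cyl n w = ⋂ (i : ℕ) (_ : i ≤ n), {ω : ℕ → V | ω i ∈ ({w i} : Set V)} := by
    ext ω
    simp [cyl]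
  rw [this]
  exact MeasurableSet.iInter fun i => MeasurableSet.iInter fun _ => measurable_coord i _

variable {G : StochGame V} {σ1 : Strategy G G.V1} {σ2 : Strategy G G.V2} {v : V}
  {μ : MeasureTheory.Measure (ℕ → V)}

lemma meas_prefEvent (hμ : G.IsPathMeasure σ1 σ2 v μ) (n : ℕ)
    (p : (Fin (n+1) → V) → Prop) [DecidablePred p] :
    μ {ω | p (res n ω)} = ∑ t ∈ Finset.univ.filter p,
      ENNReal.ofReal (G.prefixProb σ1 σ2 v n (extT t)) := by
  have hset : {ω : ℕ → V | p (res n ω)} = ⋃ t ∈ Finset.univ.filter p, cyl n (extT t) := by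
    ext ω
    simp only [Set.mem_setOf_eq, Set.mem_iUnion, Finset.mem_filter, Finset.mem_univ, true_and]
    constructor
    · intro h
      exact ⟨res n ω, h, (mem_cyl_extT _ ω).mpr rfl⟩
    · rintro ⟨t, ht, hω⟩
      rw [(mem_cyl_extT _ ω).mp hω]
      exact ht
  rw [hset, MeasureTheory.measure_biUnion_finset ?_ (fun t _ => measurable_cyl n (extT t))]
  · exact Finset.sum_congr rfl fun t _ => hμ.2 n (extT t)
  · intro t ht t' ht' hne
    simp only [Function.onFun]
    rw [Set.disjoint_left]
    intro ω hω hω'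
    exact hne (((mem_cyl_extT _ ω).mp hω).symm.trans ((mem_cyl_extT _ ω).mp hω'))

end PathMeasure

end StochGame
namespace StochGame

variable {V : Type*} [Fintype V] [DecidableEq V]

section BorelCantelli

/-- number of "missed" transitions `u → not u'` in the window `[N, K)` -/
def mc (u u' : V) (N K : ℕ) (ω : ℕ → V) : ℕ :=
  ((Finset.Ico N K).filter (fun n => ω n = u ∧ ω (n+1) ≠ u')).card

/-- no transition `u → u'` occurs in the window `[N, K)` -/
def noMiss (u u' : V) (N K : ℕ) (ω : ℕ → V) : Prop :=
  ∀ n, N ≤ n → n < K → ω n = u → ω (n+1) ≠ u'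

lemma mc_congr (u u' : V) (N K : ℕ) {ω ω' : ℕ → V} (h : ∀ i ≤ K, ω i = ω' i) :
    mc u u' N K ω = mc u u' N K ω' := by
  unfold mc
  congr 1
  apply Finset.filter_congr
  intro n hn
  rw [Finset.mem_Ico] at hn
  rw [h n (by omega), h (n+1) (by omega)]

lemma noMiss_congr (u u' : V) (N K : ℕ) {ω ω' : ℕ → V} (h : ∀ i ≤ K, ω i = ω' i) :
    noMiss u u' N K ω ↔ noMiss u u' N K ω' := by
  unfold noMiss
  constructor
  · intro hm n h1 h2 h3
    rw [← h (n+1) (by omega)]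
    exact hm n h1 h2 (by rw [h n (by omega)]; exact h3)
  · intro hm n h1 h2 h3
    rw [h (n+1) (by omega)]
    exact hm n h1 h2 (by rw [← h n (by omega)]; exact h3)

lemma mc_succ (u u' : V) (N K : ℕ) (hK : N ≤ K) (ω : ℕ → V) :
    mc u u' N (K+1) ω = mc u u' N K ω + (if ω K = u ∧ ω (K+1) ≠ u' then 1 else 0) := by
  unfold mc
  rw [Nat.Ico_succ_right_eq_insert_Ico hK, Finset.filter_insert]
  split_ifs with h
  · rw [Finset.card_insert_of_notMem (by simp [Finset.mem_Ico])]
  · simp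

lemma noMiss_succ (u u' : V) (N K : ℕ) (hK : N ≤ K) (ω : ℕ → V) :
    noMiss u u' N (K+1) ω ↔ noMiss u u' N K ω ∧ (ω K = u → ω (K+1) ≠ u') := by
  unfold noMiss
  constructor
  · intro h
    exact ⟨fun n h1 h2 => h n h1 (by omega), fun h3 => h K hK (by omega) h3⟩
  · rintro ⟨h, hK'⟩ n h1 h2 h3
    rcases Nat.lt_or_ge n K with h4 | h4
    · exact h n h1 h4 h3
    · have : n = K := by omega
      subst this
      exact hK' h3

lemma mc_mono (u u' : V) (N : ℕ) (ω : ℕ → V) {K K' : ℕ} (h : K ≤ K') :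
    mc u u' N K ω ≤ mc u u' N K' ω := by
  unfold mc
  exact Finset.card_le_card (Finset.filter_subset_filter _
    (Finset.Ico_subset_Ico le_rfl h))

variable (G : StochGame V) (σ1 : Strategy G G.V1) (σ2 : Strategy G G.V2) (v : V)

lemma Qbound (u u' : V) (q : ℝ) (hq0 : 0 < q)
    (hq : ∀ h, q ≤ G.step σ1 σ2 h u u') (N m : ℕ) :
    ∀ K, N ≤ K → ∑ t : Fin (K+1) → V,
      (if noMiss u u' N K (extT t) then
        G.prefixProb σ1 σ2 v K (extT t) * (1-q) ^ (m - mc u u' N K (extT t)) else 0)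
      ≤ (1-q) ^ m := by
  have hq1 : q ≤ 1 := le_trans (hq []) (step_le_one G σ1 σ2 [] u u')
  have hr0 : (0:ℝ) ≤ 1 - q := by linarith
  have hr1 : (1:ℝ) - q ≤ 1 := by linarith
  intro K hK
  induction K, hK using Nat.le_induction with
  | base =>
      have h1 : ∀ t : Fin (N+1) → V, noMiss u u' N N (extT t) := by
        intro t n hn1 hn2 _
        omega
      have h2 : ∀ t : Fin (N+1) → V, mc u u' N N (extT t) = 0 := by
        intro t
        unfold mc
        simp
      have h3 : (∑ t : Fin (N+1) → V, if noMiss u u' N N (extT t) then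
          G.prefixProb σ1 σ2 v N (extT t) * (1-q) ^ (m - mc u u' N N (extT t)) else 0)
          = ∑ t : Fin (N+1) → V, G.prefixProb σ1 σ2 v N (extT t) * (1-q) ^ m := by
        refine Finset.sum_congr rfl fun t _ => ?_
        rw [if_pos (h1 t), h2 t, Nat.sub_zero]
      rw [h3, ← Finset.sum_mul, total_mass G σ1 σ2 v N, one_mul]
  | succ K hK ih =>
      rw [← Equiv.sum_comp (snocE K)
        (fun t => if noMiss u u' N (K+1) (extT t) then
          G.prefixProb σ1 σ2 v (K+1) (extT t)
            * (1-q) ^ (m - mc u u' N (K+1) (extT t)) else 0)]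
      rw [Fintype.sum_prod_type]
      refine le_trans (Finset.sum_le_sum (fun t _ => ?_)) ih
      -- bound the inner sum over the last coordinate
      set x := extT t K with hx
      set c := mc u u' N K (extT t) with hc
      set P := G.prefixProb σ1 σ2 v K (extT t) with hP
      have hPn : 0 ≤ P := prefixProb_nonneg G σ1 σ2 v K (extT t)
      have hagree : ∀ a : V, ∀ i ≤ K, extT (snocE K (t, a)) i = extT t i := by
        intro a i hi
        exact extT_snoc_le t a i hi
      have hlast : ∀ a : V, extT (snocE K (t, a)) (K+1) = a := fun a => extT_snoc_last t a
      have hKco : ∀ a : V, extT (snocE K (t, a)) K = x := fun a => hagree a K le_rfl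
      have hNM : ∀ a : V, noMiss u u' N (K+1) (extT (snocE K (t, a)))
          ↔ (noMiss u u' N K (extT t) ∧ (x = u → a ≠ u')) := by
        intro a
        rw [noMiss_succ u u' N K hK, noMiss_congr u u' N K (hagree a), hKco, hlast]
      have hmc : ∀ a : V, mc u u' N (K+1) (extT (snocE K (t, a)))
          = c + (if x = u ∧ a ≠ u' then 1 else 0) := by
        intro a
        rw [mc_succ u u' N K hK, mc_congr u u' N K (hagree a), hKco, hlast]
      have hPs : ∀ a : V, G.prefixProb σ1 σ2 v (K+1) (extT (snocE K (t, a)))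
          = P * G.step σ1 σ2 (hist (extT t) K) x a := fun a => prefixProb_snoc G σ1 σ2 v K t a
      by_cases hnm : noMiss u u' N K (extT t)
      · rw [if_pos hnm]
        by_cases hxu : x = u
        · -- the current vertex is u : miss probability at most (1-q)
          have : ∀ a : V, (if noMiss u u' N (K+1) (extT (snocE K (t, a))) then
              G.prefixProb σ1 σ2 v (K+1) (extT (snocE K (t, a)))
                * (1-q) ^ (m - mc u u' N (K+1) (extT (snocE K (t, a)))) else 0)
              = (if a ≠ u' then
                  (P * G.step σ1 σ2 (hist (extT t) K) x a) * (1-q) ^ (m - (c+1)) else 0) := by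
            intro a
            by_cases ha : a ≠ u'
            · rw [if_pos ((hNM a).mpr ⟨hnm, fun _ => ha⟩), if_pos ha, hPs, hmc,
                if_pos ⟨hxu, ha⟩]
            · rw [if_neg (fun hcon => ha (((hNM a).mp hcon).2 hxu)), if_neg ha]
          simp only [this]
          rw [Finset.sum_ite, Finset.sum_const_zero, add_zero]
          have hsum : ∑ a ∈ Finset.univ.filter (fun a => a ≠ u'),
              (P * G.step σ1 σ2 (hist (extT t) K) x a) * (1-q) ^ (m - (c+1))
              = P * (1 - G.step σ1 σ2 (hist (extT t) K) x u') * (1-q) ^ (m - (c+1)) := by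
            rw [← Finset.sum_mul, ← Finset.mul_sum, step_sum_ne]
          rw [hsum]
          have h5 : 1 - G.step σ1 σ2 (hist (extT t) K) x u' ≤ 1 - q := by
            have := hq (hist (extT t) K)
            rw [hxu]
            linarith
          have h6 : (0:ℝ) ≤ 1 - G.step σ1 σ2 (hist (extT t) K) x u' := by
            have := step_le_one G σ1 σ2 (hist (extT t) K) x u'
            linarith
          calc P * (1 - G.step σ1 σ2 (hist (extT t) K) x u') * (1-q) ^ (m - (c+1))
              ≤ P * (1 - q) * (1-q) ^ (m - (c+1)) := by
                apply mul_le_mul_of_nonneg_right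
                · exact mul_le_mul_of_nonneg_left h5 hPn
                · positivity
            _ = P * ((1-q) ^ (m - (c+1) + 1)) := by ring
            _ ≤ P * ((1-q) ^ (m - c)) := by
                apply mul_le_mul_of_nonneg_left _ hPn
                exact pow_le_pow_of_le_one hr0 hr1 (by omega)
        · -- sub-case: current vertex is not u
          have : ∀ a : V, (if noMiss u u' N (K+1) (extT (snocE K (t, a))) then
              G.prefixProb σ1 σ2 v (K+1) (extT (snocE K (t, a)))
                * (1-q) ^ (m - mc u u' N (K+1) (extT (snocE K (t, a)))) else 0)
              = (P * G.step σ1 σ2 (hist (extT t) K) x a) * (1-q) ^ (m - c) := by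
            intro a
            rw [if_pos ((hNM a).mpr ⟨hnm, fun hcon => absurd hcon hxu⟩), hPs, hmc,
              if_neg (fun hcon => hxu hcon.1), add_zero]
          simp only [this]
          rw [← Finset.sum_mul, ← Finset.mul_sum, step_sum_one, mul_one]
      · -- noMiss fails already at horizon K
        have : ∀ a : V, (if noMiss u u' N (K+1) (extT (snocE K (t, a))) then
            G.prefixProb σ1 σ2 v (K+1) (extT (snocE K (t, a)))
              * (1-q) ^ (m - mc u u' N (K+1) (extT (snocE K (t, a)))) else 0) = 0 := by
          intro a
          rw [if_neg (fun hcon => hnm ((hNM a).mp hcon).1)]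
        simp only [this, Finset.sum_const_zero, if_neg hnm, le_refl]

end BorelCantelli

end StochGame
namespace StochGame

variable {V : Type*} [Fintype V] [DecidableEq V]

section BCMeasure

variable [MeasurableSpace V] [DiscreteMeasurableSpace V]
variable {G : StochGame V} {σ1 : Strategy G G.V1} {σ2 : Strategy G G.V2} {v : V}
  {μ : MeasureTheory.Measure (ℕ → V)}

lemma mc_event_bound (hμ : G.IsPathMeasure σ1 σ2 v μ) (u u' : V) (q : ℝ) (hq0 : 0 < q)
    (hq : ∀ h, q ≤ G.step σ1 σ2 h u u') (N m K : ℕ) (hK : N ≤ K) :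
    μ {ω | noMiss u u' N K ω ∧ m ≤ mc u u' N K ω} ≤ ENNReal.ofReal ((1-q)^m) := by
  have hq1 : q ≤ 1 := le_trans (hq []) (step_le_one G σ1 σ2 [] u u')
  have hr0 : (0:ℝ) ≤ 1 - q := by linarith
  have hset : {ω : ℕ → V | noMiss u u' N K ω ∧ m ≤ mc u u' N K ω}
      = {ω | (fun t : Fin (K+1) → V =>
          noMiss u u' N K (extT t) ∧ m ≤ mc u u' N K (extT t)) (res K ω)} := by
    ext ω
    have h1 : ∀ i ≤ K, ω i = extT (res K ω) i := fun i hi => (extT_res K ω i hi).symm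
    simp only [Set.mem_setOf_eq]
    rw [noMiss_congr u u' N K h1, mc_congr u u' N K h1]
  rw [hset, meas_prefEvent hμ K (fun t : Fin (K+1) → V =>
    noMiss u u' N K (extT t) ∧ m ≤ mc u u' N K (extT t))]
  rw [← ENNReal.ofReal_sum_of_nonneg (fun t _ => prefixProb_nonneg G σ1 σ2 v K (extT t))]
  apply ENNReal.ofReal_le_ofReal
  refine le_trans ?_ (Qbound G σ1 σ2 v u u' q hq0 hq N m K hK)
  rw [Finset.sum_filter]
  refine Finset.sum_le_sum fun t _ => ?_
  by_cases hp : noMiss u u' N K (extT t) ∧ m ≤ mc u u' N K (extT t)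
  · rw [if_pos hp, if_pos hp.1, Nat.sub_eq_zero_of_le hp.2, pow_zero, mul_one]
  · rw [if_neg hp]
    split_ifs
    · have := prefixProb_nonneg G σ1 σ2 v K (extT t)
      positivity
    · exact le_refl _

lemma EN_null (hμ : G.IsPathMeasure σ1 σ2 v μ) (u u' : V) (q : ℝ) (hq0 : 0 < q)
    (hq : ∀ h, q ≤ G.step σ1 σ2 h u u') (N : ℕ) :
    μ {ω | u ∈ infOcc ω ∧ ∀ n, N ≤ n → ω n = u → ω (n+1) ≠ u'} = 0 := by
  have hq1 : q ≤ 1 := le_trans (hq []) (step_le_one G σ1 σ2 [] u u')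
  have hr0 : (0:ℝ) ≤ 1 - q := by linarith
  have hr1 : 1 - q < 1 := by linarith
  set E := {ω : ℕ → V | u ∈ infOcc ω ∧ ∀ n, N ≤ n → ω n = u → ω (n+1) ≠ u'} with hE
  have hbound : ∀ m : ℕ, μ E ≤ ENNReal.ofReal ((1-q)^m) := by
    intro m
    have hcov : E ⊆ ⋃ K : ℕ, (E ∩ {ω | m ≤ mc u u' N (N+K) ω}) := by
      intro ω hω
      have hvis : ∀ m' : ℕ, ∃ K, m' ≤ mc u u' N K ω := by
        intro m'
        induction m' with
        | zero => exact ⟨N, Nat.zero_le _⟩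
        | succ m' ih =>
            obtain ⟨K0, hK0⟩ := ih
            obtain ⟨n, hn1, hn2⟩ := hω.1 (max K0 N)
            refine ⟨n+1, ?_⟩
            have hnmiss : ω n = u ∧ ω (n+1) ≠ u' :=
              ⟨hn2, hω.2 n (le_trans (le_max_right _ _) hn1) hn2⟩
            have hnotmem : n ∉ (Finset.Ico N K0).filter
                (fun k => ω k = u ∧ ω (k+1) ≠ u') := by
              simp only [Finset.mem_filter, Finset.mem_Ico]
              intro hcon
              have := le_max_left K0 N
              omega
            have hsub : insert n ((Finset.Ico N K0).filter
                (fun k => ω k = u ∧ ω (k+1) ≠ u'))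
                ⊆ (Finset.Ico N (n+1)).filter (fun k => ω k = u ∧ ω (k+1) ≠ u') := by
              intro k hk
              rcases Finset.mem_insert.mp hk with rfl | hk
              · simp only [Finset.mem_filter, Finset.mem_Ico]
                have := le_max_right K0 N
                exact ⟨⟨by omega, by omega⟩, hnmiss⟩
              · simp only [Finset.mem_filter, Finset.mem_Ico] at hk ⊢
                have := le_max_left K0 N
                exact ⟨⟨hk.1.1, by omega⟩, hk.2⟩
            have := Finset.card_le_card hsub
            rw [Finset.card_insert_of_notMem hnotmem] at this
            unfold mc at hK0 ⊢
            omega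
      obtain ⟨K1, hK1⟩ := hvis m
      refine Set.mem_iUnion.mpr ⟨K1, hω, ?_⟩
      exact le_trans hK1 (mc_mono u u' N ω (by omega))
    calc μ E ≤ μ (⋃ K : ℕ, (E ∩ {ω | m ≤ mc u u' N (N+K) ω})) :=
          MeasureTheory.measure_mono hcov
      _ = ⨆ K : ℕ, μ (E ∩ {ω | m ≤ mc u u' N (N+K) ω}) := by
          refine Directed.measure_iUnion ?_
          refine (Monotone.directed_le ?_)
          intro K K' hKK'
          exact Set.inter_subset_inter_right E
            (fun ω hω => le_trans hω (mc_mono u u' N ω (by omega)))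
      _ ≤ ENNReal.ofReal ((1-q)^m) := by
          refine iSup_le fun K => ?_
          refine le_trans (MeasureTheory.measure_mono ?_)
            (mc_event_bound hμ u u' q hq0 hq N m (N+K) (by omega))
          rintro ω ⟨hω1, hω2⟩
          exact ⟨fun n h1 h2 => hω1.2 n h1, hω2⟩
  have htend : Filter.Tendsto (fun m : ℕ => ENNReal.ofReal ((1-q)^m))
      Filter.atTop (nhds 0) := by
    have h1 : Filter.Tendsto (fun m : ℕ => (1-q)^m) Filter.atTop (nhds 0) := by
      apply tendsto_pow_atTop_nhds_zero_of_lt_one hr0 hr1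
    have h2 := ENNReal.tendsto_ofReal h1
    simpa using h2
  exact le_antisymm (ge_of_tendsto' htend hbound) zero_le

lemma infOcc_pair_null (hμ : G.IsPathMeasure σ1 σ2 v μ) (u u' : V) (q : ℝ) (hq0 : 0 < q)
    (hq : ∀ h, q ≤ G.step σ1 σ2 h u u') :
    μ {ω | u ∈ infOcc ω ∧ u' ∉ infOcc ω} = 0 := by
  have hsub : {ω : ℕ → V | u ∈ infOcc ω ∧ u' ∉ infOcc ω}
      ⊆ ⋃ N : ℕ, {ω | u ∈ infOcc ω ∧ ∀ n, N ≤ n → ω n = u → ω (n+1) ≠ u'} := by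
    rintro ω ⟨h1, h2⟩
    have h3 : ∃ N : ℕ, ∀ n, N ≤ n → ω n ≠ u' := by
      by_contra hcon
      push_neg at hcon
      exact h2 (fun N => by
        obtain ⟨n, hn1, hn2⟩ := hcon N
        exact ⟨n, hn1, hn2⟩)
    obtain ⟨N, hN⟩ := h3
    exact Set.mem_iUnion.mpr ⟨N, h1, fun n hn _ => hN (n+1) (by omega)⟩
  refine le_antisymm (le_trans (MeasureTheory.measure_mono hsub) ?_) zero_le
  calc μ (⋃ N : ℕ, {ω | u ∈ infOcc ω ∧ ∀ n, N ≤ n → ω n = u → ω (n+1) ≠ u'})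
      ≤ ∑' N : ℕ, μ {ω | u ∈ infOcc ω ∧ ∀ n, N ≤ n → ω n = u → ω (n+1) ≠ u'} :=
        MeasureTheory.measure_iUnion_le _
    _ = 0 := by simp [EN_null hμ u u' q hq0 hq]

lemma supp_null (hμ : G.IsPathMeasure σ1 σ2 v μ) :
    μ {ω | ∃ n, G.step σ1 σ2 (hist ω n) (ω n) (ω (n+1)) ≤ 0} = 0 := by
  have hsub : {ω : ℕ → V | ∃ n, G.step σ1 σ2 (hist ω n) (ω n) (ω (n+1)) ≤ 0}
      = ⋃ n : ℕ, {ω | G.step σ1 σ2 (hist ω n) (ω n) (ω (n+1)) ≤ 0} := by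
    ext ω
    simp
  rw [hsub]
  refine le_antisymm (le_trans (MeasureTheory.measure_iUnion_le _) ?_) zero_le
  have hzero : ∀ n : ℕ, μ {ω : ℕ → V | G.step σ1 σ2 (hist ω n) (ω n) (ω (n+1)) ≤ 0} = 0 := by
    intro n
    have hset : {ω : ℕ → V | G.step σ1 σ2 (hist ω n) (ω n) (ω (n+1)) ≤ 0}
        = {ω | (fun t : Fin (n+2) → V =>
            G.step σ1 σ2 (hist (extT t) n) (extT t n) (extT t (n+1)) ≤ 0) (res (n+1) ω)} := by
      ext ω
      have h1 : ∀ i ≤ n+1, ω i = extT (res (n+1) ω) i :=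
        fun i hi => (extT_res (n+1) ω i hi).symm
      simp only [Set.mem_setOf_eq]
      rw [hist_congr (w' := extT (res (n+1) ω)) n (fun i hi => h1 i (by omega)),
        h1 n (by omega), h1 (n+1) (by omega)]
    rw [hset, meas_prefEvent hμ (n+1) (fun t : Fin (n+2) → V =>
      G.step σ1 σ2 (hist (extT t) n) (extT t n) (extT t (n+1)) ≤ 0)]
    refine Finset.sum_eq_zero fun t ht => ?_
    rw [Finset.mem_filter] at ht
    rw [ENNReal.ofReal_eq_zero]
    rw [prefixProb_succ]
    exact mul_nonpos_of_nonneg_of_nonpos (prefixProb_nonneg G σ1 σ2 v n (extT t)) ht.2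
  simp [hzero]

end BCMeasure

end StochGame
namespace StochGame

variable {V : Type*} [Fintype V] [DecidableEq V]

section InfOccTrap

lemma exists_mem_infOcc (ω : ℕ → V) : ∃ x, x ∈ infOcc ω := by
  by_contra h
  push_neg at h
  have h2 : ∀ x : V, ∃ N, ∀ n, N ≤ n → ω n ≠ x := by
    intro x
    have h3 := h x
    unfold infOcc at h3
    simp only [Set.mem_setOf_eq, not_forall, not_exists, not_and] at h3
    obtain ⟨N, hN⟩ := h3
    exact ⟨N, hN⟩
  choose N hN using h2
  set M := Finset.univ.sup N with hM
  exact hN (ω M) M (Finset.le_sup (Finset.mem_univ _)) rfl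

lemma infOcc_succ (ω : ℕ → V) (x : V) (hx : x ∈ infOcc ω) :
    ∃ y, y ∈ infOcc ω ∧ ∃ n, ω n = x ∧ ω (n+1) = y := by
  have key : ∃ y, ∀ N, ∃ n, N ≤ n ∧ ω n = x ∧ ω (n+1) = y := by
    by_contra h
    push_neg at h
    have h2 : ∀ y : V, ∃ N, ∀ n, N ≤ n → ω n = x → ω (n+1) ≠ y := by
      intro y
      obtain ⟨N, hN⟩ := h y
      exact ⟨N, fun n h1 h2 => hN n h1 h2⟩
    choose N hN using h2
    set M := Finset.univ.sup N with hM
    obtain ⟨n, hn1, hn2⟩ := hx M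
    exact hN (ω (n+1)) n (le_trans (Finset.le_sup (Finset.mem_univ _)) hn1) hn2 rfl
  obtain ⟨y, hy⟩ := key
  refine ⟨y, fun N => ?_, ?_⟩
  · obtain ⟨n, hn, _, h2⟩ := hy N
    exact ⟨n+1, by omega, h2⟩
  · obtain ⟨n, _, h1, h2⟩ := hy 0
    exact ⟨n, h1, h2⟩

/-- a trap for Player 1: a set of non-terminal vertices in which Player 1 can force the
play to remain forever, provided Player 2 and the probabilistic vertices may follow all
their outgoing edges -/
def IsTrap (G : StochGame V) (C : Set V) : Prop :=
  C.Nonempty ∧ (∀ x ∈ C, ¬ G.Terminal x) ∧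
    (∀ x ∈ C, x ∈ G.V1 → ∃ y ∈ C, 0 < G.δ x y) ∧
    (∀ x ∈ C, x ∉ G.V1 → ∀ y, 0 < G.δ x y → y ∈ C)

end InfOccTrap

section Measurability

variable [MeasurableSpace V] [DiscreteMeasurableSpace V]

lemma measurable_infOcc (x : V) : MeasurableSet {ω : ℕ → V | x ∈ infOcc ω} := by
  have h : {ω : ℕ → V | x ∈ infOcc ω}
      = ⋂ N : ℕ, ⋃ n : ℕ, ⋃ (_ : N ≤ n), {ω : ℕ → V | ω n ∈ ({x} : Set V)} := by
    ext ω
    simp [infOcc]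
  rw [h]
  exact MeasurableSet.iInter fun N => MeasurableSet.iUnion fun n =>
    MeasurableSet.iUnion fun _ => measurable_coord n _

lemma measurable_FP2 (G : StochGame V) : MeasurableSet G.FP2 := by
  have h : G.FP2 = ⋂ (u : V) (_ : u ∈ G.V2) (u' : V) (_ : u' ∈ G.post u),
      ({ω : ℕ → V | u ∈ infOcc ω}ᶜ ∪ {ω | u' ∈ infOcc ω}) := by
    ext ω
    simp only [FP2, Set.mem_setOf_eq, Set.mem_iInter, Set.mem_union, Set.mem_compl_iff]
    constructor
    · intro h u hu u' hu'
      by_cases hi : u ∈ infOcc ω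
      · exact Or.inr (h u hu hi u' hu')
      · exact Or.inl hi
    · intro h u hu hi u' hu'
      rcases h u hu u' hu' with h' | h'
      · exact absurd hi h'
      · exact h'
  rw [h]
  exact MeasurableSet.iInter fun u => MeasurableSet.iInter fun _ =>
    MeasurableSet.iInter fun u' => MeasurableSet.iInter fun _ =>
      ((measurable_infOcc u).compl.union (measurable_infOcc u'))

lemma measurable_ReachT (G : StochGame V) : MeasurableSet G.ReachT := by
  have h : G.ReachT = ⋃ i : ℕ, {ω : ℕ → V | ω i ∈ {x | G.Terminal x}} := by
    ext ω
    simp [ReachT]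
  rw [h]
  exact MeasurableSet.iUnion fun i => measurable_coord i _

end Measurability

section MainLemmas

variable [MeasurableSpace V] [DiscreteMeasurableSpace V]
variable {G : StochGame V} {σ1 : Strategy G G.V1} {σ2 : Strategy G G.V2} {v : V}
  {μ : MeasureTheory.Measure (ℕ → V)}

lemma reach_of_noTrap (hμ : G.IsPathMeasure σ1 σ2 v μ) (hfair : μ G.FP2 = 1)
    (hnt : ¬ ∃ C, G.IsTrap C) : μ G.ReachT = 1 := by
  haveI := hμ.1
  -- the null set of non-fair behaviour at probabilistic vertices
  have hpair : ∀ u u' : V, μ (⋃ (_ : u ∈ G.VP) (_ : 0 < G.δ u u'),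
      {ω : ℕ → V | u ∈ infOcc ω ∧ u' ∉ infOcc ω}) = 0 := by
    intro u u'
    by_cases h1 : u ∈ G.VP
    · by_cases h2 : 0 < G.δ u u'
      · have hstep : ∀ h, G.step σ1 σ2 h u u' = G.δ u u' := by
          intro h
          unfold step
          rw [if_neg (fun hc => G.disj1P u ⟨hc, h1⟩),
            if_neg (fun hc => G.disj2P u ⟨hc, h1⟩)]
        have := infOcc_pair_null hμ u u' (G.δ u u') h2
          (fun h => le_of_eq (hstep h).symm)
        simp [h1, h2, this]
      · simp [h2]
    · simp [h1]
  set PairBad := ⋃ (u : V) (u' : V), (⋃ (_ : u ∈ G.VP) (_ : 0 < G.δ u u'),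
      {ω : ℕ → V | u ∈ infOcc ω ∧ u' ∉ infOcc ω}) with hPB
  have hPBnull : μ PairBad = 0 := by
    refine le_antisymm (le_trans (MeasureTheory.measure_iUnion_le _) ?_) zero_le
    have : ∀ u : V, μ (⋃ (u' : V), (⋃ (_ : u ∈ G.VP) (_ : 0 < G.δ u u'),
        {ω : ℕ → V | u ∈ infOcc ω ∧ u' ∉ infOcc ω})) = 0 := by
      intro u
      refine le_antisymm (le_trans (MeasureTheory.measure_iUnion_le _) ?_) zero_le
      simp [hpair u]
    simp [this]
  set SuppBad := {ω : ℕ → V | ∃ n, G.step σ1 σ2 (hist ω n) (ω n) (ω (n+1)) ≤ 0} with hSB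
  have hSBnull : μ SuppBad = 0 := supp_null hμ
  have hFPnull : μ G.FP2ᶜ = 0 :=
    (MeasureTheory.prob_compl_eq_zero_iff (measurable_FP2 G)).mpr hfair
  have hBadnull : μ (G.FP2ᶜ ∪ PairBad ∪ SuppBad) = 0 := by
    refine le_antisymm (le_trans (MeasureTheory.measure_union_le _ _) ?_) zero_le
    rw [hSBnull]
    refine le_trans (add_le_add_left (MeasureTheory.measure_union_le _ _) _) ?_
    rw [hFPnull, hPBnull]
    simp
  have hsub : G.ReachTᶜ ⊆ G.FP2ᶜ ∪ PairBad ∪ SuppBad := by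
    intro ω hω
    by_contra hcon
    simp only [Set.mem_union, not_or] at hcon
    obtain ⟨⟨hfp, hpb⟩, hsb⟩ := hcon
    rw [Set.notMem_compl_iff] at hfp
    -- ω is fair, has positive steps, and never reaches a terminal vertex
    -- so infOcc ω is a trap
    apply hnt
    refine ⟨infOcc ω, exists_mem_infOcc ω, ?_, ?_, ?_⟩
    · intro x hx hterm
      obtain ⟨n, _, hn⟩ := hx 0
      exact hω ⟨n, by rw [hn]; exact hterm⟩
    · intro x hx hx1
      obtain ⟨y, hy, n, hn1, hn2⟩ := infOcc_succ ω x hx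
      have hpos : 0 < G.step σ1 σ2 (hist ω n) (ω n) (ω (n+1)) := by
        by_contra hc
        exact hsb ⟨n, by linarith [not_lt.mp hc]⟩
      rw [hn1, hn2] at hpos
      have : G.step σ1 σ2 (hist ω n) x y = σ1.f (hist ω n) x y := by
        unfold step
        rw [if_pos hx1]
      rw [this] at hpos
      exact ⟨y, hy, σ1.support (hist ω n) x hx1 y hpos⟩
    · intro x hx hx1 y hy
      rcases G.cover x with h | h | h
      · exact absurd h hx1
      · exact hfp x h hx y hy
      · by_contra hyc
        exact hpb (Set.mem_iUnion.mpr ⟨x, Set.mem_iUnion.mpr ⟨y,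
          Set.mem_iUnion.mpr ⟨h, Set.mem_iUnion.mpr ⟨hy, hx, hyc⟩⟩⟩⟩)
  have : μ G.ReachTᶜ = 0 := MeasureTheory.measure_mono_null hsub hBadnull
  exact (MeasureTheory.prob_compl_eq_zero_iff (measurable_ReachT G)).mp this

lemma fair_uniform (G : StochGame V) (σu2 : G.Strategy G.V2)
    (huniform : ∀ (h : List V) (u : V), u ∈ G.V2 → ∀ u' : V,
      σu2.f h u u' = if 0 < G.δ u u' then ((G.post u).ncard : ℝ)⁻¹ else 0) :
    G.Fair σu2 := by
  intro σ1 v μ hμ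
  haveI := hμ.1
  rw [← MeasureTheory.prob_compl_eq_zero_iff (measurable_FP2 G)]
  have hpair : ∀ u u' : V, μ (⋃ (_ : u ∈ G.V2 ∧ u' ∈ G.post u),
      {ω : ℕ → V | u ∈ infOcc ω ∧ u' ∉ infOcc ω}) = 0 := by
    intro u u'
    by_cases h1 : u ∈ G.V2 ∧ u' ∈ G.post u
    · have hq0 : (0:ℝ) < ((G.post u).ncard : ℝ)⁻¹ := by
        have hfin : (G.post u).Finite := Set.toFinite _
        have hne : (G.post u).Nonempty := by
          obtain ⟨y, hy⟩ := G.post_nonempty u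
          exact ⟨y, hy⟩
        have := Set.ncard_pos hfin |>.mpr hne
        positivity
      have hstep : ∀ h, ((G.post u).ncard : ℝ)⁻¹ ≤ G.step σ1 σu2 h u u' := by
        intro h
        have hδ : 0 < G.δ u u' := h1.2
        unfold step
        rw [if_neg (fun hc => G.disj12 u ⟨hc, h1.1⟩), if_pos h1.1,
          huniform h u h1.1 u', if_pos hδ]
      have := infOcc_pair_null hμ u u' _ hq0 hstep
      simp [h1, this]
    · simp [h1]
  have hsub : G.FP2ᶜ ⊆ ⋃ (u : V) (u' : V), (⋃ (_ : u ∈ G.V2 ∧ u' ∈ G.post u),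
      {ω : ℕ → V | u ∈ infOcc ω ∧ u' ∉ infOcc ω}) := by
    intro ω hω
    simp only [Set.mem_compl_iff, FP2, Set.mem_setOf_eq] at hω
    push_neg at hω
    obtain ⟨u, hu, hui, u', hu', hui'⟩ := hω
    exact Set.mem_iUnion.mpr ⟨u, Set.mem_iUnion.mpr ⟨u',
      Set.mem_iUnion.mpr ⟨⟨hu, hu'⟩, hui, hui'⟩⟩⟩
  refine le_antisymm (le_trans (MeasureTheory.measure_mono hsub) ?_) zero_le
  refine le_trans (MeasureTheory.measure_iUnion_le _) ?_
  have : ∀ u : V, μ (⋃ (u' : V), (⋃ (_ : u ∈ G.V2 ∧ u' ∈ G.post u),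
      {ω : ℕ → V | u ∈ infOcc ω ∧ u' ∉ infOcc ω})) = 0 := by
    intro u
    refine le_antisymm (le_trans (MeasureTheory.measure_iUnion_le _) ?_) zero_le
    simp [hpair u]
  simp [this]

end MainLemmas

end StochGame
namespace StochGame

variable {V : Type*} [Fintype V] [DecidableEq V]

section Existence

variable (G : StochGame V) (σ1 : Strategy G G.V1) (σ2 : Strategy G G.V2) (v : V)

/-- cylinder weights, as extended non-negative reals -/
noncomputable def ρ' (n : ℕ) (w : ℕ → V) : ℝ≥0∞ := ENNReal.ofReal (G.prefixProb σ1 σ2 v n w)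

lemma ρ'_sum (n K : ℕ) (hK : n ≤ K) (w : ℕ → V) :
    ∑ t ∈ Finset.univ.filter (fun t => agr n w (K := K) t), ρ' G σ1 σ2 v K (extT t)
      = ρ' G σ1 σ2 v n w := by
  unfold ρ'
  rw [← ENNReal.ofReal_sum_of_nonneg (fun t _ => prefixProb_nonneg G σ1 σ2 v K (extT t)),
    ← sum_ext G σ1 σ2 v n K hK w, Finset.sum_filter]

/-- the pre-measure on cylinder sets -/
noncomputable def m0 (S : Set (ℕ → V)) : ℝ≥0∞ :=
  if S = ∅ then 0 else ⨅ (n : ℕ) (w : ℕ → V) (_ : S = cyl n w), ρ' G σ1 σ2 v n w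

lemma m0_empty : m0 G σ1 σ2 v ∅ = 0 := if_pos rfl

/-- the outer measure induced by the cylinder weights -/
noncomputable def OM : MeasureTheory.OuterMeasure (ℕ → V) :=
  MeasureTheory.OuterMeasure.ofFunction (m0 G σ1 σ2 v) (m0_empty G σ1 σ2 v)

lemma OM_apply (S : Set (ℕ → V)) :
    OM G σ1 σ2 v S = ⨅ (f : ℕ → Set (ℕ → V)) (_ : S ⊆ ⋃ i, f i),
      ∑' i, m0 G σ1 σ2 v (f i) :=
  MeasureTheory.OuterMeasure.ofFunction_apply _ _ _

lemma m0_cyl_le (n : ℕ) (w : ℕ → V) : m0 G σ1 σ2 v (cyl n w) ≤ ρ' G σ1 σ2 v n w := by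
  unfold m0
  split_ifs with h
  · exact zero_le
  · exact iInf_le_of_le n (iInf_le_of_le w (iInf_le _ rfl))

lemma rho_le_finite_cover (J : Finset ℕ) (ns : ℕ → ℕ) (ws : ℕ → ℕ → V)
    (n : ℕ) (w : ℕ → V) (hcov : cyl n w ⊆ ⋃ i ∈ J, cyl (ns i) (ws i)) :
    ρ' G σ1 σ2 v n w ≤ ∑ i ∈ J, ρ' G σ1 σ2 v (ns i) (ws i) := by
  set K := max n (J.sup ns) with hKdef
  have hn : n ≤ K := le_max_left _ _
  have hni : ∀ i ∈ J, ns i ≤ K := fun i hi => le_trans (Finset.le_sup hi) (le_max_right _ _)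
  rw [← ρ'_sum G σ1 σ2 v n K hn w]
  have hrw : ∀ i ∈ J, ρ' G σ1 σ2 v (ns i) (ws i)
      = ∑ t ∈ Finset.univ.filter (fun t => agr (ns i) (ws i) (K := K) t),
          ρ' G σ1 σ2 v K (extT t) :=
    fun i hi => (ρ'_sum G σ1 σ2 v (ns i) K (hni i hi) (ws i)).symm
  rw [Finset.sum_congr rfl hrw]
  have hg : ∀ t : Fin (K+1) → V, ∃ i : ℕ,
      agr n w (K := K) t → (i ∈ J ∧ agr (ns i) (ws i) (K := K) t) := by
    intro t
    by_cases h : agr n w (K := K) t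
    · have hmem : extT t ∈ cyl n w := fun i hi => h i hi
      obtain ⟨i, hiJ, hi⟩ := Set.mem_iUnion₂.mp (hcov hmem)
      exact ⟨i, fun _ => ⟨hiJ, fun j hj => hi j hj⟩⟩
    · exact ⟨0, fun hc => absurd hc h⟩
  choose g hgp using hg
  rw [← Finset.sum_fiberwise_of_maps_to
    (g := g) (t := J)
    (fun t ht => (hgp t (Finset.mem_filter.mp ht).2).1)
    (fun t => ρ' G σ1 σ2 v K (extT t))]
  refine Finset.sum_le_sum fun i _ => ?_
  refine Finset.sum_le_sum_of_subset fun t ht => ?_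
  rw [Finset.mem_filter] at ht ⊢
  obtain ⟨ht1, ht2⟩ := ht
  have := (hgp t (Finset.mem_filter.mp ht1).2).2
  rw [ht2] at this
  exact ⟨Finset.mem_univ t, this⟩

lemma isOpen_cyl [TopologicalSpace V] [DiscreteTopology V] (n : ℕ) (w : ℕ → V) :
    IsOpen (cyl n w) := by
  have h : cyl n w = ⋂ i ∈ Finset.range (n+1), (fun ω : ℕ → V => ω i) ⁻¹' {w i} := by
    ext ω
    simp only [cyl, Set.mem_setOf_eq, Set.mem_iInter, Finset.mem_range, Set.mem_preimage,
      Set.mem_singleton_iff]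
    exact ⟨fun h i hi => h i (by omega), fun h i hi => h i (by omega)⟩
  rw [h]
  exact isOpen_biInter_finset fun i _ => (continuous_apply i).isOpen_preimage _ (isOpen_discrete _)

lemma isClosed_cyl [TopologicalSpace V] [DiscreteTopology V] (n : ℕ) (w : ℕ → V) :
    IsClosed (cyl n w) := by
  have h : cyl n w = ⋂ i ∈ Finset.range (n+1), (fun ω : ℕ → V => ω i) ⁻¹' {w i} := by
    ext ω
    simp only [cyl, Set.mem_setOf_eq, Set.mem_iInter, Finset.mem_range, Set.mem_preimage,
      Set.mem_singleton_iff]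
    exact ⟨fun h i hi => h i (by omega), fun h i hi => h i (by omega)⟩
  rw [h]
  exact isClosed_biInter fun i _ =>
    IsClosed.preimage (continuous_apply i) (isClosed_discrete _)

lemma cover_bound (n : ℕ) (w : ℕ → V) (f : ℕ → Set (ℕ → V))
    (hcov : cyl n w ⊆ ⋃ i, f i) :
    ρ' G σ1 σ2 v n w ≤ ∑' i, m0 G σ1 σ2 v (f i) := by
  by_cases htop : ∃ i, m0 G σ1 σ2 v (f i) = ⊤
  · rw [ENNReal.tsum_eq_top_of_eq_top htop]
    exact le_top
  push_neg at htop
  refine ENNReal.le_of_forall_pos_le_add fun ε hε _ => ?_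
  have hch : ∀ i : ℕ, ∃ p : Bool × ℕ × (ℕ → V),
      (p.1 = true → (f i ⊆ cyl p.2.1 p.2.2 ∧
        ρ' G σ1 σ2 v p.2.1 p.2.2 ≤ m0 G σ1 σ2 v (f i) + (ε : ℝ≥0∞) * 2⁻¹^(i+1))) ∧
      (p.1 = false → f i = ∅) := by
    intro i
    by_cases hem : f i = ∅
    · refine ⟨(false, 0, w), fun h => ?_, fun _ => hem⟩
      simp at h
    · set b := m0 G σ1 σ2 v (f i) + (ε : ℝ≥0∞) * 2⁻¹^(i+1) with hb
      have hlt : m0 G σ1 σ2 v (f i) < b := by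
        rw [hb]
        refine ENNReal.lt_add_right (htop i) ?_
        refine mul_ne_zero (by simpa using hε.ne') ?_
        refine pow_ne_zero _ (ENNReal.inv_ne_zero.mpr ?_)
        norm_num
      rw [m0, if_neg hem] at hlt
      obtain ⟨n', hn'⟩ := iInf_lt_iff.mp hlt
      obtain ⟨w', hw'⟩ := iInf_lt_iff.mp hn'
      obtain ⟨hrep, hval⟩ := iInf_lt_iff.mp hw'
      exact ⟨(true, n', w'), fun _ => ⟨hrep.subset, hval.le⟩, fun h => by simp at h⟩
  choose p hp1 hp2 using hch
  letI : TopologicalSpace V := ⊥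
  haveI : DiscreteTopology V := ⟨rfl⟩
  have hcompact : IsCompact (cyl n w) := (isClosed_cyl n w).isCompact
  set g : ℕ → Set (ℕ → V) :=
    fun i => if (p i).1 = true then cyl (p i).2.1 (p i).2.2 else ∅ with hgdef
  have hopen : ∀ i, IsOpen (g i) := by
    intro i
    rw [hgdef]
    dsimp only
    split_ifs
    · exact isOpen_cyl _ _
    · exact isOpen_empty
  have hcov2 : cyl n w ⊆ ⋃ i, g i := by
    refine subset_trans hcov (Set.iUnion_mono fun i => ?_)
    rw [hgdef]
    dsimp only
    cases hpi : (p i).1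
    · rw [hp2 i hpi]
      simp
    · rw [if_pos rfl]
      exact (hp1 i hpi).1
  obtain ⟨J, hJ⟩ := hcompact.elim_finite_subcover g hopen hcov2
  set J' := J.filter (fun i => (p i).1 = true) with hJ'def
  have hcov3 : cyl n w ⊆ ⋃ i ∈ J', cyl (p i).2.1 (p i).2.2 := by
    intro ω hω
    obtain ⟨i, hiJ, hgi⟩ := Set.mem_iUnion₂.mp (hJ hω)
    rw [hgdef] at hgi
    dsimp only at hgi
    cases hpi : (p i).1
    · rw [hpi] at hgi
      simp at hgi
    · rw [hpi, if_pos rfl] at hgi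
      exact Set.mem_iUnion₂.mpr ⟨i, Finset.mem_filter.mpr ⟨hiJ, hpi⟩, hgi⟩
  refine le_trans (rho_le_finite_cover G σ1 σ2 v J'
    (fun i => (p i).2.1) (fun i => (p i).2.2) n w hcov3) ?_
  have hbnd : ∀ i ∈ J', ρ' G σ1 σ2 v (p i).2.1 (p i).2.2
      ≤ m0 G σ1 σ2 v (f i) + (ε : ℝ≥0∞) * 2⁻¹^(i+1) :=
    fun i hi => (hp1 i (Finset.mem_filter.mp hi).2).2
  have hgeo : ∑' i : ℕ, (ε : ℝ≥0∞) * 2⁻¹^(i+1) = ε := by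
    rw [ENNReal.tsum_mul_left]
    have h2 : ∑' i : ℕ, (2⁻¹:ℝ≥0∞)^(i+1) = 1 := by
      have h3 : ∀ i : ℕ, (2⁻¹:ℝ≥0∞)^(i+1) = 2⁻¹ * 2⁻¹^i := fun i => by rw [pow_succ]; ring
      rw [tsum_congr h3, ENNReal.tsum_mul_left, ENNReal.tsum_geometric,
        ENNReal.one_sub_inv_two]
      exact ENNReal.mul_inv_cancel (ENNReal.inv_ne_zero.mpr (by norm_num))
        (ENNReal.inv_ne_top.mpr (by norm_num))
    rw [h2, mul_one]
  calc ∑ i ∈ J', ρ' G σ1 σ2 v (p i).2.1 (p i).2.2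
      ≤ ∑ i ∈ J', (m0 G σ1 σ2 v (f i) + (ε : ℝ≥0∞) * 2⁻¹^(i+1)) := Finset.sum_le_sum hbnd
    _ = ∑ i ∈ J', m0 G σ1 σ2 v (f i) + ∑ i ∈ J', (ε : ℝ≥0∞) * 2⁻¹^(i+1) :=
        Finset.sum_add_distrib
    _ ≤ (∑' i, m0 G σ1 σ2 v (f i)) + (ε : ℝ≥0∞) :=
        add_le_add (ENNReal.sum_le_tsum J') (le_trans (ENNReal.sum_le_tsum J') (le_of_eq hgeo))

lemma OM_cyl (n : ℕ) (w : ℕ → V) : OM G σ1 σ2 v (cyl n w) = ρ' G σ1 σ2 v n w := by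
  refine le_antisymm (le_trans (MeasureTheory.OuterMeasure.ofFunction_le _)
    (m0_cyl_le G σ1 σ2 v n w)) ?_
  rw [OM_apply]
  exact le_iInf fun f => le_iInf fun hcov => cover_bound G σ1 σ2 v n w f hcov

lemma split_bound (j : ℕ) (a : V) (T : Set (ℕ → V)) :
    OM G σ1 σ2 v (T ∩ (fun ω : ℕ → V => ω j) ⁻¹' {a})
      + OM G σ1 σ2 v (T \ (fun ω : ℕ → V => ω j) ⁻¹' {a}) ≤ m0 G σ1 σ2 v T := by
  by_cases hem : T = ∅
  · subst hem
    simp [m0_empty]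
  rw [m0, if_neg hem]
  refine le_iInf fun n' => le_iInf fun w' => le_iInf fun hrep => ?_
  subst hrep
  set K := max n' j with hKdef
  have hn' : n' ≤ K := le_max_left _ _
  have hj : j ≤ K := le_max_right _ _
  have hset1 : cyl n' w' ∩ (fun ω : ℕ → V => ω j) ⁻¹' {a}
      = ⋃ t ∈ Finset.univ.filter
          (fun t : Fin (K+1) → V => agr n' w' (K := K) t ∧ extT t j = a),
            cyl K (extT t) := by
    ext ω
    simp only [Set.mem_inter_iff, Set.mem_iUnion, Finset.mem_filter, Finset.mem_univ,
      true_and, Set.mem_preimage, Set.mem_singleton_iff]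
    constructor
    · rintro ⟨h1, h2⟩
      refine ⟨res K ω, ⟨⟨fun i hi => ?_, ?_⟩, (mem_cyl_extT _ ω).mpr rfl⟩⟩
      · rw [extT_res K ω i (le_trans hi hn')]
        exact h1 i hi
      · rw [extT_res K ω j hj]
        exact h2
    · rintro ⟨t, ⟨⟨hagr, hja⟩, hmem⟩⟩
      have hres := (mem_cyl_extT t ω).mp hmem
      have hcoord : ∀ i ≤ K, ω i = extT t i := by
        intro i hi
        rw [← hres]
        exact (extT_res K ω i hi).symm
      constructor
      · intro i hi
        rw [hcoord i (le_trans hi hn')]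
        exact hagr i hi
      · rw [hcoord j hj]
        exact hja
  have hset2 : cyl n' w' \ (fun ω : ℕ → V => ω j) ⁻¹' {a}
      = ⋃ t ∈ Finset.univ.filter
          (fun t : Fin (K+1) → V => agr n' w' (K := K) t ∧ ¬ extT t j = a),
            cyl K (extT t) := by
    ext ω
    simp only [Set.mem_diff, Set.mem_iUnion, Finset.mem_filter, Finset.mem_univ,
      true_and, Set.mem_preimage, Set.mem_singleton_iff]
    constructor
    · rintro ⟨h1, h2⟩
      refine ⟨res K ω, ⟨⟨fun i hi => ?_, ?_⟩, (mem_cyl_extT _ ω).mpr rfl⟩⟩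
      · rw [extT_res K ω i (le_trans hi hn')]
        exact h1 i hi
      · rw [extT_res K ω j hj]
        exact h2
    · rintro ⟨t, ⟨⟨hagr, hja⟩, hmem⟩⟩
      have hres := (mem_cyl_extT t ω).mp hmem
      have hcoord : ∀ i ≤ K, ω i = extT t i := by
        intro i hi
        rw [← hres]
        exact (extT_res K ω i hi).symm
      constructor
      · intro i hi
        rw [hcoord i (le_trans hi hn')]
        exact hagr i hi
      · rw [hcoord j hj]
        exact hja
  have hcylbound : ∀ t : Fin (K+1) → V,
      OM G σ1 σ2 v (cyl K (extT t)) ≤ ρ' G σ1 σ2 v K (extT t) :=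
    fun t => le_trans (MeasureTheory.OuterMeasure.ofFunction_le _) (m0_cyl_le G σ1 σ2 v K _)
  calc OM G σ1 σ2 v (cyl n' w' ∩ (fun ω : ℕ → V => ω j) ⁻¹' {a})
        + OM G σ1 σ2 v (cyl n' w' \ (fun ω : ℕ → V => ω j) ⁻¹' {a})
      ≤ (∑ t ∈ Finset.univ.filter
            (fun t : Fin (K+1) → V => agr n' w' (K := K) t ∧ extT t j = a),
            ρ' G σ1 σ2 v K (extT t))
        + ∑ t ∈ Finset.univ.filter
            (fun t : Fin (K+1) → V => agr n' w' (K := K) t ∧ ¬ extT t j = a),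
            ρ' G σ1 σ2 v K (extT t) := by
        refine add_le_add ?_ ?_
        · rw [hset1]
          refine le_trans (MeasureTheory.measure_biUnion_finset_le _ _) ?_
          exact Finset.sum_le_sum fun t _ => hcylbound t
        · rw [hset2]
          refine le_trans (MeasureTheory.measure_biUnion_finset_le _ _) ?_
          exact Finset.sum_le_sum fun t _ => hcylbound t
    _ = ∑ t ∈ Finset.univ.filter (fun t => agr n' w' (K := K) t),
          ρ' G σ1 σ2 v K (extT t) := by
        rw [← Finset.sum_filter_add_sum_filter_not
          (Finset.univ.filter (fun t => agr n' w' (K := K) t))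
          (fun t => extT t j = a), Finset.filter_filter, Finset.filter_filter]
    _ = ρ' G σ1 σ2 v n' w' := ρ'_sum G σ1 σ2 v n' K hn' w'

end Existence

end StochGame
namespace StochGame

variable {V : Type*} [Fintype V] [DecidableEq V]

section Existence2

variable (G : StochGame V) (σ1 : Strategy G G.V1) (σ2 : Strategy G G.V2) (v : V)

lemma carath_coord (j : ℕ) (a : V) :
    MeasurableSet[(OM G σ1 σ2 v).caratheodory] ((fun ω : ℕ → V => ω j) ⁻¹' {a}) := by
  rw [MeasureTheory.OuterMeasure.isCaratheodory_iff_le]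
  intro S
  have hOM : OM G σ1 σ2 v S = ⨅ (f : ℕ → Set (ℕ → V)) (_ : S ⊆ ⋃ i, f i),
      ∑' i, m0 G σ1 σ2 v (f i) := OM_apply G σ1 σ2 v S
  rw [hOM]
  refine le_iInf fun f => le_iInf fun hcov => ?_
  calc OM G σ1 σ2 v (S ∩ (fun ω : ℕ → V => ω j) ⁻¹' {a})
        + OM G σ1 σ2 v (S \ (fun ω : ℕ → V => ω j) ⁻¹' {a})
      ≤ OM G σ1 σ2 v ((⋃ i, f i) ∩ (fun ω : ℕ → V => ω j) ⁻¹' {a})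
        + OM G σ1 σ2 v ((⋃ i, f i) \ (fun ω : ℕ → V => ω j) ⁻¹' {a}) :=
        add_le_add (MeasureTheory.measure_mono (Set.inter_subset_inter_left _ hcov))
          (MeasureTheory.measure_mono (Set.diff_subset_diff_left hcov))
    _ = OM G σ1 σ2 v (⋃ i, f i ∩ (fun ω : ℕ → V => ω j) ⁻¹' {a})
        + OM G σ1 σ2 v (⋃ i, f i \ (fun ω : ℕ → V => ω j) ⁻¹' {a}) := by
        rw [Set.iUnion_inter, Set.iUnion_diff]
    _ ≤ (∑' i, OM G σ1 σ2 v (f i ∩ (fun ω : ℕ → V => ω j) ⁻¹' {a}))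
        + ∑' i, OM G σ1 σ2 v (f i \ (fun ω : ℕ → V => ω j) ⁻¹' {a}) :=
        add_le_add (MeasureTheory.measure_iUnion_le _) (MeasureTheory.measure_iUnion_le _)
    _ = ∑' i, (OM G σ1 σ2 v (f i ∩ (fun ω : ℕ → V => ω j) ⁻¹' {a})
        + OM G σ1 σ2 v (f i \ (fun ω : ℕ → V => ω j) ⁻¹' {a})) := ENNReal.tsum_add.symm
    _ ≤ ∑' i, m0 G σ1 σ2 v (f i) :=
        ENNReal.tsum_le_tsum fun i => split_bound G σ1 σ2 v j a (f i)

variable [MeasurableSpace V] [DiscreteMeasurableSpace V]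

lemma pi_le_carath :
    (inferInstance : MeasurableSpace (ℕ → V)) ≤ (OM G σ1 σ2 v).caratheodory := by
  have hpi : (inferInstance : MeasurableSpace (ℕ → V))
      = ⨆ i : ℕ, MeasurableSpace.comap (fun ω : ℕ → V => ω i) inferInstance := rfl
  rw [hpi]
  refine iSup_le fun i => ?_
  rw [MeasurableSpace.le_def]
  rintro s ⟨s', _, rfl⟩
  have h : (fun ω : ℕ → V => ω i) ⁻¹' s' = ⋃ a ∈ s', (fun ω : ℕ → V => ω i) ⁻¹' {a} := by
    ext ω
    simp
  rw [h]
  exact MeasurableSet.biUnion (Set.to_countable s') (fun a _ => carath_coord G σ1 σ2 v i a)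

lemma exists_pathMeasure : ∃ μ : MeasureTheory.Measure (ℕ → V),
    G.IsPathMeasure σ1 σ2 v μ := by
  refine ⟨(OM G σ1 σ2 v).toMeasure (pi_le_carath G σ1 σ2 v), ?_, ?_⟩
  · constructor
    rw [MeasureTheory.toMeasure_apply _ _ MeasurableSet.univ]
    refine le_antisymm ?_ ?_
    · have hcov : (Set.univ : Set (ℕ → V)) ⊆ ⋃ a : V, cyl 0 (fun _ => a) := by
        intro ω _
        refine Set.mem_iUnion.mpr ⟨ω 0, fun i hi => ?_⟩
        have h0 : i = 0 := by omega
        rw [h0]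
      refine le_trans (MeasureTheory.measure_mono hcov) ?_
      refine le_trans (MeasureTheory.measure_iUnion_fintype_le _ _) ?_
      have hval : ∀ a : V, OM G σ1 σ2 v (cyl 0 (fun _ => a))
          = ENNReal.ofReal (if a = v then 1 else 0) := by
        intro a
        rw [OM_cyl]
        unfold ρ' prefixProb
        simp
      simp only [hval]
      rw [show (1 : ℝ≥0∞) = ENNReal.ofReal (if v = v then 1 else 0) by simp]
      rw [← ENNReal.ofReal_sum_of_nonneg (fun a _ => by split_ifs <;> norm_num)]
      apply ENNReal.ofReal_le_ofReal
      rw [Finset.sum_ite_eq' Finset.univ v (fun _ => (1:ℝ))]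
      simp
    · have h1 : OM G σ1 σ2 v (cyl 0 (fun _ => v)) = 1 := by
        rw [OM_cyl]
        unfold ρ' prefixProb
        simp
      rw [← h1]
      exact MeasureTheory.measure_mono (Set.subset_univ _)
  · intro n w
    rw [MeasureTheory.toMeasure_apply _ _ (measurable_cyl n w), OM_cyl]
    rfl

end Existence2

end StochGame
open StochGame in
/-- `G` is stopping under fairness iff a terminal vertex is reached almost surely against the
uniform memoryless Player 2 strategy (the strategy choosing among successors uniformly). -/
theorem stoppingUnderFairness_iff_uniform
    {V : Type*} [Fintype V] [DecidableEq V] [MeasurableSpace V] [DiscreteMeasurableSpace V]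
    (G : StochGame V) (σu2 : G.Strategy G.V2)
    (huniform : ∀ (h : List V) (u : V), u ∈ G.V2 → ∀ u' : V,
      σu2.f h u u' = if 0 < G.δ u u' then ((G.post u).ncard : ℝ)⁻¹ else 0) :
    G.StoppingUnderFairness ↔
      ∀ (w : V) (σ1 : G.Strategy G.V1) (μ : Measure (ℕ → V)),
        G.IsPathMeasure σ1 σu2 w μ → μ G.ReachT = 1 := by
  constructor
  · intro hstop w σ1 μ hμ
    exact hstop σ1 σu2 (fair_uniform G σu2 huniform) w μ hμ
  · intro hRHS σ1 σ2 hfair v μ hμ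
    have hnt : ¬ ∃ C, G.IsTrap C := by
      rintro ⟨C, hC⟩
      obtain ⟨w, hw⟩ := hC.1
      have hpick : ∀ x : V, ∃ y, 0 < G.δ x y ∧ (x ∈ C → x ∈ G.V1 → y ∈ C) := by
        intro x
        by_cases hx : x ∈ C ∧ x ∈ G.V1
        · obtain ⟨y, hy1, hy2⟩ := hC.2.2.1 x hx.1 hx.2
          exact ⟨y, hy2, fun _ _ => hy1⟩
        · obtain ⟨y, hy⟩ := G.post_nonempty x
          exact ⟨y, hy, fun h1 h2 => absurd ⟨h1, h2⟩ hx⟩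
      choose pick hpick1 hpick2 using hpick
      let σ1' : G.Strategy G.V1 :=
        { f := fun _ x y => if y = pick x then 1 else 0
          nonneg := by
            intro h x y
            split_ifs <;> norm_num
          sum_one := by
            intro h x
            rw [Finset.sum_ite_eq' Finset.univ (pick x) (fun _ => (1:ℝ))]
            simp
          support := by
            intro h x _ y hy
            split_ifs at hy with he
            · rw [he]
              exact hpick1 x
            · norm_num at hy }
      obtain ⟨μ', hμ'⟩ := exists_pathMeasure G σ1' σu2 w
      have h1 := hRHS w σ1' μ' hμ'
      have hkeep : ∀ (n : ℕ) (ww : ℕ → V), G.prefixProb σ1' σu2 w n ww ≠ 0 →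
          ∀ j ≤ n, ww j ∈ C := by
        intro n
        induction n with
        | zero =>
            intro ww h j hj
            have hj0 : j = 0 := by omega
            subst hj0
            unfold prefixProb at h
            simp only [Finset.range_zero, Finset.prod_empty, mul_one] at h
            split_ifs at h with h0
            · rw [h0]; exact hw
            · exact absurd rfl h
        | succ n ih =>
            intro ww h j hj
            rw [prefixProb_succ] at h
            have h2 : G.prefixProb σ1' σu2 w n ww ≠ 0 := fun hc => h (by rw [hc]; ring)
            rcases Nat.lt_or_ge j (n+1) with hj' | hj'
            · exact ih ww h2 j (by omega)
            · have hj'' : j = n+1 := by omega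
              subst hj''
              have hstep : G.step σ1' σu2 (hist ww n) (ww n) (ww (n+1)) ≠ 0 :=
                fun hc => h (by rw [hc]; ring)
              have hwn : ww n ∈ C := ih ww h2 n le_rfl
              unfold step at hstep
              split_ifs at hstep with hv1 hv2
              · have hne : ww (n+1) = pick (ww n) := by
                  by_contra hc
                  exact hstep (by simp only [σ1']; rw [if_neg hc])
                rw [hne]
                exact hpick2 (ww n) hwn hv1
              · rw [huniform (hist ww n) (ww n) hv2 (ww (n+1))] at hstep
                split_ifs at hstep with hδ
                · exact hC.2.2.2 _ hwn (fun hc => G.disj12 _ ⟨hc, hv2⟩) _ hδ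
                · exact absurd rfl hstep
              · have hδ : 0 < G.δ (ww n) (ww (n+1)) :=
                  lt_of_le_of_ne (G.δ_nonneg _ _) (Ne.symm hstep)
                exact hC.2.2.2 _ hwn hv1 _ hδ
      have h0 : μ' G.ReachT = 0 := by
        have hsub : G.ReachT ⊆ ⋃ i : ℕ, {ω : ℕ → V | ω i ∉ C} := by
          rintro ω ⟨i, hi⟩
          exact Set.mem_iUnion.mpr ⟨i, fun hc => hC.2.1 (ω i) hc hi⟩
        refine le_antisymm (le_trans (MeasureTheory.measure_mono hsub)
          (le_trans (MeasureTheory.measure_iUnion_le _) ?_)) zero_le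
        have hz : ∀ i : ℕ, μ' {ω : ℕ → V | ω i ∉ C} = 0 := by
          intro i
          have hset : {ω : ℕ → V | ω i ∉ C}
              = {ω | (fun t : Fin (i+1) → V => extT t i ∉ C) (res i ω)} := by
            ext ω
            simp only [Set.mem_setOf_eq]
            rw [extT_res i ω i le_rfl]
          rw [hset, meas_prefEvent hμ' i (fun t : Fin (i+1) → V => extT t i ∉ C)]
          refine Finset.sum_eq_zero fun t ht => ?_
          rw [Finset.mem_filter] at ht
          rw [ENNReal.ofReal_eq_zero]
          rcases eq_or_ne (G.prefixProb σ1' σu2 w i (extT t)) 0 with hz | hz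
          · exact le_of_eq hz
          · exact absurd (hkeep i (extT t) hz i le_rfl) ht.2
        simp [hz]
      rw [h1] at h0
      exact one_ne_zero h0
    exact reach_of_noTrap hμ (hfair σ1 v μ hμ) hnt
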